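/- Let k be an algebraically closed field, let l ∈ k[x,y] be a nonconstant polynomial in two variables, and let φ ∈ k[x] and ψ ∈ k[y] be nonzero polynomials such that l and the polynomial φ(x)·ψ(y) ∈ k[x,y] have no common nonunit factor. Then the set {(λ,μ) ∈ k × k : l(λ,μ) = 0 and φ(λ)·ψ(μ) ≠ 0} is infinite. (Claim, via Bezout's theorem, in the proof of Proposition 3.4.2) -/

import Mathlib

open MvPolynomial

noncomputable section AuxPoly

variable (k : Type*) [Field k]

/-- iso `k[x₀] ≃ k[X]` -/
def uEquiv : MvPolynomial (Fin 1) k ≃ₐ[k] Polynomial k :=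
  (MvPolynomial.finSuccEquiv k 0).trans
    (Polynomial.mapAlgEquiv (MvPolynomial.isEmptyAlgEquiv k (Fin 0)))

/-- iso `k[x₀,x₁] ≃ (k[X])[Y]` with `x₀ ↦ Y` (outer), `x₁ ↦ X` (inner). -/
def eEquiv : MvPolynomial (Fin 2) k ≃ₐ[k] Polynomial (Polynomial k) :=
  (MvPolynomial.finSuccEquiv k 1).trans (Polynomial.mapAlgEquiv (uEquiv k))

variable {k}

lemma eval_empty (x : MvPolynomial (Fin 0) k) :
    eval (![] : Fin 0 → k) x = MvPolynomial.isEmptyAlgEquiv k (Fin 0) x := by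
  have : (eval (![] : Fin 0 → k) : MvPolynomial (Fin 0) k →+* k)
      = ((MvPolynomial.isEmptyAlgEquiv k (Fin 0) : MvPolynomial (Fin 0) k →ₐ[k] k) :
          MvPolynomial (Fin 0) k →+* k) := by
    apply MvPolynomial.ringHom_ext
    · intro r
      simp
      exact ((MvPolynomial.isEmptyAlgEquiv k (Fin 0)).commutes r).symm
    · intro i; exact i.elim0
  exact congrFun (congrArg (fun f : MvPolynomial (Fin 0) k →+* k => ⇑f) this) x

lemma u_eval (b : k) (g : MvPolynomial (Fin 1) k) :
    eval ![b] g = Polynomial.eval b (uEquiv k g) := by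
  have h := MvPolynomial.eval_eq_eval_mv_eval' (![] : Fin 0 → k) b g
  have hc : (Fin.cons b (![] : Fin 0 → k) : Fin 1 → k) = ![b] := by
    funext i; fin_cases i <;> rfl
  rw [hc] at h
  rw [h]
  congr 1
  simp only [uEquiv, AlgEquiv.trans_apply, Polynomial.coe_mapAlgEquiv]
  congr 1
  exact RingHom.ext eval_empty

lemma e_eval (a b : k) (f : MvPolynomial (Fin 2) k) :
    eval ![a, b] f = Polynomial.eval a (Polynomial.map (Polynomial.evalRingHom b) (eEquiv k f)) := by
  have h := MvPolynomial.eval_eq_eval_mv_eval' (![b] : Fin 1 → k) a f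
  have hc : (Fin.cons a (![b] : Fin 1 → k) : Fin 2 → k) = ![a, b] := by
    funext i; fin_cases i <;> rfl
  rw [hc] at h
  rw [h]
  congr 1
  have hcomp : (eval ![b] : MvPolynomial (Fin 1) k →+* k)
      = (Polynomial.evalRingHom b).comp
          ((uEquiv k : MvPolynomial (Fin 1) k →ₐ[k] Polynomial k) :
            MvPolynomial (Fin 1) k →+* Polynomial k) :=
    RingHom.ext fun g => u_eval b g
  rw [hcomp, ← Polynomial.map_map]
  simp only [eEquiv, AlgEquiv.trans_apply, Polynomial.coe_mapAlgEquiv]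
  rfl

lemma e_eval' (a b : k) (f : MvPolynomial (Fin 2) k) :
    eval ![a, b] f = Polynomial.eval b (Polynomial.eval (Polynomial.C a) (eEquiv k f)) := by
  rw [e_eval, Polynomial.eval_map, Polynomial.eval₂_evalRingHom]

lemma e_X0 : eEquiv k (X 0) = Polynomial.X := by
  unfold eEquiv
  simp [MvPolynomial.finSuccEquiv_X_zero]

lemma e_X1 : eEquiv k (X 1) = Polynomial.C Polynomial.X := by
  unfold eEquiv
  have h : (X 1 : MvPolynomial (Fin 2) k) = X (Fin.succ 0) := rfl
  simp only [h, AlgEquiv.trans_apply, MvPolynomial.finSuccEquiv_X_succ,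
    Polynomial.coe_mapAlgEquiv, Polynomial.map_C]
  congr 1
  unfold uEquiv
  simp [MvPolynomial.finSuccEquiv_X_zero]

lemma e_C (c : k) : eEquiv k (C c) = Polynomial.C (Polynomial.C c) := by
  have : (C c : MvPolynomial (Fin 2) k) = algebraMap k _ c := rfl
  rw [this, AlgEquiv.commutes]
  rfl

end AuxPoly

/-- Claim (via Bezout's theorem) in the proof of Proposition 3.4.2: over an algebraically closed
field, if `l(x,y)` is a nonconstant polynomial having no common nonunit factor with
`φ(x)·ψ(y)` (where `φ, ψ` are nonzero one-variable polynomials), then there are infinitely many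
points `(λ,μ)` with `l(λ,μ) = 0` and `φ(λ)·ψ(μ) ≠ 0`. -/
theorem infinite_zero_set_of_coprime (k : Type*) [Field k] [IsAlgClosed k]
    (l : MvPolynomial (Fin 2) k) (hl : ∀ c : k, l ≠ C c)
    (φ ψ : Polynomial k) (hφ : φ ≠ 0) (hψ : ψ ≠ 0)
    (hcop : ∀ d : MvPolynomial (Fin 2) k,
      d ∣ l →
      d ∣ (Polynomial.aeval (X 0 : MvPolynomial (Fin 2) k) φ *
           Polynomial.aeval (X 1 : MvPolynomial (Fin 2) k) ψ) →
      IsUnit d) :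
    {p : k × k | eval ![p.1, p.2] l = 0 ∧
      Polynomial.eval p.1 φ * Polynomial.eval p.2 ψ ≠ 0}.Infinite := by
  classical
  set P : Polynomial (Polynomial k) := eEquiv k l with hP
  -- the zero set of l
  set S₀ : Set (k × k) := {p : k × k | eval ![p.1, p.2] l = 0} with hS₀def
  -- sections are nonzero at roots of φ
  have hQ : ∀ a : k, Polynomial.eval a φ = 0 → Polynomial.eval (Polynomial.C a) P ≠ 0 := by
    intro a ha h0
    have hdvd : (Polynomial.X - Polynomial.C (Polynomial.C a)) ∣ P :=
      Polynomial.dvd_iff_isRoot.2 h0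
    have hdl : (X 0 - C a : MvPolynomial (Fin 2) k) ∣ l := by
      have := map_dvd (eEquiv k).symm hdvd
      rwa [show ((eEquiv k).symm (Polynomial.X - Polynomial.C (Polynomial.C a)))
          = X 0 - C a by
        apply (eEquiv k).injective
        rw [AlgEquiv.apply_symm_apply]
        simp only [map_sub, e_X0, e_C],
        AlgEquiv.symm_apply_apply] at this
    have hdφ : (X 0 - C a : MvPolynomial (Fin 2) k) ∣
        (Polynomial.aeval (X 0 : MvPolynomial (Fin 2) k) φ *
         Polynomial.aeval (X 1 : MvPolynomial (Fin 2) k) ψ) := by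
      apply dvd_mul_of_dvd_left
      have h1 : (Polynomial.X - Polynomial.C a) ∣ φ := Polynomial.dvd_iff_isRoot.2 ha
      have := map_dvd (Polynomial.aeval (X 0 : MvPolynomial (Fin 2) k)) h1
      simpa [MvPolynomial.algebraMap_eq] using this
    have hunit := hcop _ hdl hdφ
    exact (hunit.map (eval ![a, 0] : MvPolynomial (Fin 2) k →+* k)).ne_zero (by simp)
  -- sections are nonzero at roots of ψ
  have hR : ∀ b : k, Polynomial.eval b ψ = 0 →
      Polynomial.map (Polynomial.evalRingHom b) P ≠ 0 := by
    intro b hb h0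
    have hdvd : (Polynomial.C (Polynomial.X - Polynomial.C b)) ∣ P := by
      rw [Polynomial.C_dvd_iff_dvd_coeff]
      intro i
      apply Polynomial.dvd_iff_isRoot.2
      have : (Polynomial.map (Polynomial.evalRingHom b) P).coeff i = 0 := by rw [h0]; simp
      simpa [Polynomial.coeff_map] using this
    have hdl : (X 1 - C b : MvPolynomial (Fin 2) k) ∣ l := by
      have := map_dvd (eEquiv k).symm hdvd
      rwa [show ((eEquiv k).symm (Polynomial.C (Polynomial.X - Polynomial.C b)))
          = X 1 - C b by
        apply (eEquiv k).injective
        rw [AlgEquiv.apply_symm_apply]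
        simp only [map_sub, e_X1, e_C, Polynomial.C_sub],
        AlgEquiv.symm_apply_apply] at this
    have hdψ : (X 1 - C b : MvPolynomial (Fin 2) k) ∣
        (Polynomial.aeval (X 0 : MvPolynomial (Fin 2) k) φ *
         Polynomial.aeval (X 1 : MvPolynomial (Fin 2) k) ψ) := by
      apply dvd_mul_of_dvd_right
      have h1 : (Polynomial.X - Polynomial.C b) ∣ ψ := Polynomial.dvd_iff_isRoot.2 hb
      have := map_dvd (Polynomial.aeval (X 1 : MvPolynomial (Fin 2) k)) h1
      simpa [MvPolynomial.algebraMap_eq] using this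
    have hunit := hcop _ hdl hdψ
    exact (hunit.map (eval ![0, b] : MvPolynomial (Fin 2) k →+* k)).ne_zero (by simp)
  -- S₀ is infinite
  have hS₀ : S₀.Infinite := by
    by_cases hdeg : P.natDegree = 0
    · -- P = C q with q nonconstant
      have hPC : P = Polynomial.C (P.coeff 0) := Polynomial.eq_C_of_natDegree_eq_zero hdeg
      set q : Polynomial k := P.coeff 0 with hq
      have hqdeg : q.natDegree ≠ 0 := by
        intro h
        have hqc : q = Polynomial.C (q.coeff 0) := Polynomial.eq_C_of_natDegree_eq_zero h
        apply hl (q.coeff 0)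
        apply (eEquiv k).injective
        rw [e_C, ← hP, hPC]
        exact congrArg Polynomial.C hqc
      have hq0 : q ≠ 0 := fun h => hqdeg (by rw [h]; simp)
      obtain ⟨b, hb⟩ := IsAlgClosed.exists_root q (by
        rw [Polynomial.degree_eq_natDegree hq0]
        exact_mod_cast fun h => hqdeg (by exact_mod_cast h))
      apply Set.infinite_of_injective_forall_mem
        (f := fun a : k => ((a, b) : k × k))
        (fun x y hxy => by simpa using congrArg Prod.fst hxy)
      intro a
      show eval ![a, b] l = 0
      rw [e_eval', ← hP, hPC]
      simpa using hb
    · -- P has positive degree in the outer variable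
      have hP0 : P ≠ 0 := fun h => hdeg (by rw [h]; simp)
      set c : Polynomial k := P.leadingCoeff with hc
      have hc0 : c ≠ 0 := Polynomial.leadingCoeff_ne_zero.2 hP0
      have hTb : (c.roots.toFinset : Set k).Finite := (c.roots.toFinset : Set k).toFinite
      have hcompl : ((c.roots.toFinset : Set k)ᶜ).Infinite := hTb.infinite_compl
      have hmem : ∀ b ∈ (c.roots.toFinset : Set k)ᶜ, ∃ a : k, (a, b) ∈ S₀ := by
        intro b hb
        have hcb : Polynomial.eval b c ≠ 0 := fun h =>
          hb (Multiset.mem_toFinset.mpr ((Polynomial.mem_roots hc0).mpr h))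
        set Rb : Polynomial k := Polynomial.map (Polynomial.evalRingHom b) P with hRb
        have hcoeff : Rb.coeff P.natDegree ≠ 0 := by
          have hlc : P.coeff P.natDegree = c := rfl
          rw [hRb, Polynomial.coeff_map, hlc]
          simpa using hcb
        have hRb0 : Rb ≠ 0 := fun h => hcoeff (by rw [h]; simp)
        have hRbdeg : Rb.natDegree ≠ 0 := by
          intro h
          have := Polynomial.le_natDegree_of_ne_zero hcoeff
          omega
        obtain ⟨a, ha⟩ := IsAlgClosed.exists_root Rb (by
          rw [Polynomial.degree_eq_natDegree hRb0]
          exact_mod_cast fun h => hRbdeg (by exact_mod_cast h))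
        refine ⟨a, ?_⟩
        show eval ![a, b] l = 0
        rw [e_eval, ← hP, ← hRb]
        exact ha
      choose g hg using hmem
      have : ((fun b : ((c.roots.toFinset : Set k)ᶜ : Set k) => ((g b b.2, (b : k)) : k × k)) ''
          Set.univ).Infinite := by
        apply Set.Infinite.image
        · intro x _ y _ hxy
          have : (x : k) = y := by simpa using congrArg Prod.snd hxy
          exact Subtype.ext this
        · rw [Set.infinite_univ_iff]
          exact hcompl.to_subtype
      apply this.mono
      rintro p ⟨b, -, rfl⟩
      exact hg b b.2
  -- the bad set is finite
  have hbad : (S₀ ∩ {p : k × k | Polynomial.eval p.1 φ * Polynomial.eval p.2 ψ = 0}).Finite := by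
    have hsub : S₀ ∩ {p : k × k | Polynomial.eval p.1 φ * Polynomial.eval p.2 ψ = 0} ⊆
        (⋃ a ∈ (φ.roots.toFinset : Set k),
          {a} ×ˢ ((Polynomial.eval (Polynomial.C a) P).roots.toFinset : Set k)) ∪
        (⋃ b ∈ (ψ.roots.toFinset : Set k),
          (((Polynomial.map (Polynomial.evalRingHom b) P).roots.toFinset : Set k)) ×ˢ {b}) := by
      rintro ⟨a, b⟩ ⟨hS, hzero⟩
      rcases mul_eq_zero.1 hzero with h | h
      · left
        have hS' : eval ![a, b] l = 0 := hS
        rw [e_eval', ← hP] at hS'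
        refine Set.mem_biUnion
          (Finset.mem_coe.mpr (Multiset.mem_toFinset.mpr ((Polynomial.mem_roots hφ).mpr h)))
          ⟨rfl, Finset.mem_coe.mpr (Multiset.mem_toFinset.mpr
            ((Polynomial.mem_roots (hQ a h)).mpr hS'))⟩
      · right
        have hS' : eval ![a, b] l = 0 := hS
        rw [e_eval, ← hP] at hS'
        refine Set.mem_biUnion
          (Finset.mem_coe.mpr (Multiset.mem_toFinset.mpr ((Polynomial.mem_roots hψ).mpr h)))
          ⟨Finset.mem_coe.mpr (Multiset.mem_toFinset.mpr
            ((Polynomial.mem_roots (hR b h)).mpr hS')), rfl⟩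
    apply Set.Finite.subset _ hsub
    apply Set.Finite.union
    · apply Set.Finite.biUnion (Set.toFinite _)
      intro a _
      exact Set.Finite.prod (Set.finite_singleton a) (Set.toFinite _)
    · apply Set.Finite.biUnion (Set.toFinite _)
      intro b _
      exact Set.Finite.prod (Set.toFinite _) (Set.finite_singleton b)
  -- conclude
  have := hS₀.diff hbad
  apply this.mono
  rintro p ⟨hp, hnp⟩
  refine ⟨hp, ?_⟩
  intro h
  exact hnp ⟨hp, h⟩
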